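/- For the Werner–Holevo channel W_d and every pure state |ψ⟩⟨ψ|, the output W_d(|ψ⟩⟨ψ|) has eigenvalue 1/(d−1) with multiplicity d−1 and eigenvalue 0; consequently the maximal ℓ_p norm is ν_p(W_d) = (d−1)^{(1−p)/p}. -/

import Mathlib

open Matrix BigOperators Polynomial
open scoped ComplexOrder

/-- The Werner–Holevo channel `W_d(γ) = ((Tr γ)𝟙 − γᵀ)/(d−1)`. -/
noncomputable def whChannel (d : ℕ) (γ : Matrix (Fin d) (Fin d) ℂ) :
    Matrix (Fin d) (Fin d) ℂ :=
  ((d : ℂ) - 1)⁻¹ • (γ.trace • (1 : Matrix (Fin d) (Fin d) ℂ) - γᵀ)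

/-- The maximal ℓ_p norm `ν_p(ℰ)`, the supremum over density matrices `γ`
of `(Tr[ℰ(γ)^p])^{1/p}`. -/
noncomputable def nu (p : ℕ) {n : Type*} [Fintype n] [DecidableEq n]
    (E : Matrix n n ℂ → Matrix n n ℂ) : ℝ :=
  ⨆ γ : {γ : Matrix n n ℂ // γ.PosSemidef ∧ γ.trace = 1},
    ((E γ.1 ^ p).trace.re) ^ ((p : ℝ)⁻¹)

lemma conjPow {n : Type*} [Fintype n] [DecidableEq n] (U V M : Matrix n n ℂ)
    (hUV : U * V = 1) (hVU : V * U = 1) (p : ℕ) :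
    (U * M * V) ^ p = U * M ^ p * V := by
  induction p with
  | zero => simp [hUV]
  | succ k ih =>
    rw [pow_succ, pow_succ, ih]
    simp only [Matrix.mul_assoc]
    rw [← Matrix.mul_assoc V U, hVU, one_mul]

lemma idemPow {n : Type*} [Fintype n] [DecidableEq n] (M : Matrix n n ℂ)
    (h : M * M = M) : ∀ p, 0 < p → M ^ p = M
  | 1, _ => pow_one M
  | (k + 2), _ => by
    rw [pow_succ, idemPow M h (k + 1) (Nat.succ_pos _), h]

lemma keyRpow (d p : ℕ) (hd : 2 ≤ d) (hp : 0 < p) :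
    (((d : ℝ) - 1)⁻¹ ^ p * ((d : ℝ) - 1)) ^ ((p : ℝ)⁻¹)
      = ((d : ℝ) - 1) ^ ((1 - (p : ℝ)) / (p : ℝ)) := by
  have ha0 : (0 : ℝ) < (d : ℝ) - 1 := by
    have : (2 : ℝ) ≤ (d : ℝ) := by exact_mod_cast hd
    linarith
  have h1 : ((d : ℝ) - 1)⁻¹ ^ p * ((d : ℝ) - 1) = ((d : ℝ) - 1) ^ ((1 : ℝ) - (p : ℝ)) := by
    rw [Real.rpow_sub ha0, Real.rpow_one, Real.rpow_natCast, inv_pow, inv_mul_eq_div]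
  rw [h1, ← Real.rpow_mul ha0.le]
  rw [div_eq_mul_inv]

lemma traceWhPow (d p : ℕ) (hd : 2 ≤ d) (γ : Matrix (Fin d) (Fin d) ℂ)
    (h : γ.PosSemidef) (htr : γ.trace = 1) :
    ∃ μ : Fin d → ℝ, (∀ i, 0 ≤ μ i) ∧ (∑ i, μ i) = 1 ∧
      ((whChannel d γ) ^ p).trace
        = ((∑ i, (((d : ℝ) - 1)⁻¹ * (1 - μ i)) ^ p : ℝ) : ℂ) := by
  have hB : (γᵀ).PosSemidef := h.transpose
  have hH : (γᵀ).IsHermitian := hB.1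
  set U : Matrix (Fin d) (Fin d) ℂ := (hH.eigenvectorUnitary : Matrix (Fin d) (Fin d) ℂ) with hU
  set μ : Fin d → ℝ := hH.eigenvalues with hμ
  have hUV : U * star U = 1 := (Matrix.mem_unitaryGroup_iff).mp hH.eigenvectorUnitary.2
  have hVU : star U * U = 1 := (Matrix.mem_unitaryGroup_iff').mp hH.eigenvectorUnitary.2
  have hspec : γᵀ = U * diagonal (fun i => ((μ i : ℝ) : ℂ)) * star U := by
    convert hH.spectral_theorem using 3
    rw [Unitary.conjStarAlgAut_apply]; rfl
  have hcast : ((d : ℂ) - 1)⁻¹ = ((((d : ℝ) - 1)⁻¹ : ℝ) : ℂ) := by push_cast; ring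
  have hA : whChannel d γ
      = U * diagonal (fun i => (((((d:ℝ)-1)⁻¹ * (1 - μ i)) : ℝ) : ℂ)) * star U := by
    unfold whChannel
    rw [htr, one_smul, hspec]
    have h1 : (1 : Matrix (Fin d) (Fin d) ℂ) = U * 1 * star U := by
      rw [Matrix.mul_one, hUV]
    nth_rewrite 1 [h1]
    rw [← Matrix.sub_mul, ← Matrix.mul_sub]
    rw [← smul_mul_assoc, ← mul_smul_comm]
    congr 2
    rw [hcast]
    ext i j
    by_cases hij : i = j
    · subst hij
      simp [Matrix.smul_apply, Matrix.sub_apply, Matrix.one_apply, Matrix.diagonal_apply_eq]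
    · simp [Matrix.smul_apply, Matrix.sub_apply, Matrix.one_apply_ne hij,
        Matrix.diagonal_apply_ne _ hij]
  have hμtr : ∑ i, μ i = 1 := by
    have h2 : (γᵀ).trace = ((∑ i, μ i : ℝ) : ℂ) := by
      rw [hspec, Matrix.trace_mul_cycle, hVU, one_mul, trace_diagonal]
      push_cast
      ring
    rw [Matrix.trace_transpose, htr] at h2
    exact_mod_cast h2.symm
  refine ⟨μ, fun i => hB.eigenvalues_nonneg i, hμtr, ?_⟩
  rw [hA, conjPow U (star U) _ hUV hVU, diagonal_pow,
    Matrix.trace_mul_cycle, hVU, one_mul, trace_diagonal]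
  simp only [Pi.pow_apply]
  rw [Complex.ofReal_sum]
  refine Finset.sum_congr rfl fun i _ => ?_
  push_cast
  ring

lemma traceVMV (d : ℕ) (ψ : Fin d → ℂ) (hψC : ∑ i, ψ i * (starRingEnd ℂ) (ψ i) = 1) :
    (Matrix.vecMulVec ψ (star ψ)).trace = 1 := by
  rw [Matrix.trace]
  simpa [Matrix.diag, Matrix.vecMulVec_apply] using hψC

lemma whPureTrace (d : ℕ) (ψ : Fin d → ℂ) (p : ℕ) (hp : 0 < p) (hd : 2 ≤ d)
    (hψC : ∑ i, ψ i * (starRingEnd ℂ) (ψ i) = 1) :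
    ((whChannel d (Matrix.vecMulVec ψ (star ψ))) ^ p).trace
      = ((((d : ℝ) - 1)⁻¹ ^ p * ((d : ℝ) - 1) : ℝ) : ℂ) := by
  set N : Matrix (Fin d) (Fin d) ℂ := (Matrix.vecMulVec ψ (star ψ))ᵀ with hN
  have hNapp : ∀ i j, N i j = ψ j * (starRingEnd ℂ) (ψ i) := by
    intro i j; simp [hN, Matrix.vecMulVec_apply, Pi.star_apply, RCLike.star_def, mul_comm]
  have hNN : N * N = N := by
    ext i j
    rw [Matrix.mul_apply]
    simp_rw [hNapp]
    calc ∑ k, ψ k * (starRingEnd ℂ) (ψ i) * (ψ j * (starRingEnd ℂ) (ψ k))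
        = (ψ j * (starRingEnd ℂ) (ψ i)) * ∑ k, ψ k * (starRingEnd ℂ) (ψ k) := by
          rw [Finset.mul_sum]; refine Finset.sum_congr rfl fun k _ => by ring
      _ = ψ j * (starRingEnd ℂ) (ψ i) := by rw [hψC, mul_one]
  have hIdem : (1 - N) * (1 - N) = 1 - N := by
    have h2 : (1 - N) * (1 - N) = 1 - N - N + N * N := by noncomm_ring
    rw [h2, hNN]; abel
  have hNtr : N.trace = 1 := by
    rw [hN, Matrix.trace_transpose]
    exact traceVMV d ψ hψC
  have hA : whChannel d (Matrix.vecMulVec ψ (star ψ)) = ((d : ℂ) - 1)⁻¹ • (1 - N) := by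
    unfold whChannel
    rw [traceVMV d ψ hψC, one_smul]
  rw [hA, _root_.smul_pow, idemPow _ hIdem p hp, Matrix.trace_smul, Matrix.trace_sub,
    Matrix.trace_one, hNtr]
  have hcast : ((d : ℂ) - 1)⁻¹ = ((((d : ℝ) - 1)⁻¹ : ℝ) : ℂ) := by push_cast; ring
  rw [hcast, Fintype.card_fin, smul_eq_mul]
  push_cast
  ring

set_option maxHeartbeats 1000000 in
set_option synthInstance.maxHeartbeats 400000 in
lemma whCharpoly (d : ℕ) (hd : 2 ≤ d) (ψ : Fin d → ℂ)
    (hψC : ∑ i, ψ i * (starRingEnd ℂ) (ψ i) = 1) :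
    (whChannel d (Matrix.vecMulVec ψ (star ψ))).charpoly
      = X * (X - C (((d : ℂ) - 1)⁻¹)) ^ (d - 1) := by
  set c : ℂ := ((d : ℂ) - 1)⁻¹ with hc
  set A : Matrix (Fin d) (Fin d) ℂ := whChannel d (Matrix.vecMulVec ψ (star ψ)) with hAdef
  have hAapp : ∀ i j, A i j = c * (if i = j then 1 else 0) - c * (ψ j * (starRingEnd ℂ) (ψ i)) := by
    intro i j
    rw [hAdef]
    unfold whChannel
    rw [traceVMV d ψ hψC, one_smul]
    simp [Matrix.sub_apply, Matrix.smul_apply, Matrix.one_apply, Matrix.vecMulVec_apply,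
      Matrix.transpose_apply, mul_sub, Pi.star_apply, RCLike.star_def, mul_comm]
    rw [hc]
  set φ : ℂ[X] →+* RatFunc ℂ := (algebraMap ℂ[X] (RatFunc ℂ) : ℂ[X] →+* RatFunc ℂ) with hφ
  have hinj : Function.Injective φ := RatFunc.algebraMap_injective ℂ
  apply hinj
  rw [Matrix.charpoly, RingHom.map_det, _root_.map_mul, map_pow, _root_.map_sub,
    RingHom.mapMatrix_apply]
  set a : RatFunc ℂ := φ X - φ (C c) with ha
  have hane : a ≠ 0 := by
    rw [ha, ← map_sub]
    exact fun h => (Polynomial.X_sub_C_ne_zero c) (hinj (by simpa using h))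
  set u : Fin d → RatFunc ℂ := fun i => φ (C (c * (starRingEnd ℂ) (ψ i))) with hu
  set v : Fin d → RatFunc ℂ := fun j => φ (C (ψ j)) with hv
  have hmap : (Matrix.charmatrix A).map φ
      = a • (1 : Matrix (Fin d) (Fin d) (RatFunc ℂ)) + Matrix.replicateCol Unit u * Matrix.replicateRow Unit v := by
    ext i j
    by_cases hij : i = j
    · subst hij
      rw [Matrix.map_apply, Matrix.charmatrix_apply_eq]
      simp only [Matrix.add_apply, Matrix.smul_apply, Matrix.one_apply_eq, Matrix.mul_apply,
        Matrix.replicateCol_apply, Matrix.replicateRow_apply, Finset.univ_unique, Finset.sum_singleton]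
      rw [hAapp, ha, hu, hv]
      simp only [if_pos rfl, mul_one, _root_.map_sub, ← _root_.map_mul, ← C_mul, smul_eq_mul]
      simp only [if_true, mul_one]
      have he : c * (ψ i * (starRingEnd ℂ) (ψ i)) = c * (starRingEnd ℂ) (ψ i) * ψ i := by ring
      rw [he]
      ring
    · rw [Matrix.map_apply, Matrix.charmatrix_apply_ne _ _ _ hij]
      simp only [Matrix.add_apply, Matrix.smul_apply, Matrix.one_apply_ne hij, Matrix.mul_apply,
        Matrix.replicateCol_apply, Matrix.replicateRow_apply, Finset.univ_unique, Finset.sum_singleton]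
      rw [hAapp, hu, hv]
      simp only [if_neg hij, mul_zero, zero_sub, map_neg, smul_eq_mul, mul_zero, zero_add]
      rw [← _root_.map_mul, ← C_mul]
      congr 2
      ring
  rw [hmap]
  have hfact : a • (1 : Matrix (Fin d) (Fin d) (RatFunc ℂ))
        + Matrix.replicateCol Unit u * Matrix.replicateRow Unit v
      = a • ((1 : Matrix (Fin d) (Fin d) (RatFunc ℂ))
        + Matrix.replicateCol Unit (a⁻¹ • u) * Matrix.replicateRow Unit v) := by
    rw [smul_add, Matrix.replicateCol_smul, Matrix.smul_mul, smul_smul, mul_inv_cancel₀ hane, one_smul]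
  rw [hfact, Matrix.det_smul, Matrix.det_one_add_replicateCol_mul_replicateRow]
  have hvu : v ⬝ᵥ u = φ (C c) := by
    rw [dotProduct]
    simp only [hu, hv, ← _root_.map_mul, ← C_mul]
    rw [← map_sum, ← map_sum]
    congr 2
    calc ∑ j, ψ j * (c * (starRingEnd ℂ) (ψ j))
        = c * ∑ j, ψ j * (starRingEnd ℂ) (ψ j) := by
          rw [Finset.mul_sum]; exact Finset.sum_congr rfl fun j _ => by ring
      _ = c := by rw [hψC, mul_one]
  rw [Fintype.card_fin, dotProduct_smul, smul_eq_mul, hvu]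
  have hd1 : d = (d - 1) + 1 := (Nat.succ_pred_eq_of_pos (lt_of_lt_of_le two_pos hd)).symm
  have hpow : a ^ d = a ^ (d - 1) * a := by
    conv_lhs => rw [hd1]
    rw [pow_succ]
  have hXa : φ X = a + φ (C c) := by rw [ha]; ring
  rw [hXa, hpow]
  field_simp

/-- For every pure state `|ψ⟩⟨ψ|`, the output `W_d(|ψ⟩⟨ψ|)` has eigenvalue
`1/(d−1)` with multiplicity `d−1` and eigenvalue `0`; consequently
`ν_p(W_d) = (d−1)^{(1−p)/p}`. -/
theorem wernerHolevo_pure_output (d p : ℕ) (hd : 2 ≤ d) (hp : 0 < p)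
    (ψ : Fin d → ℂ) (hψ : ∑ i, ‖ψ i‖ ^ 2 = 1) :
    (whChannel d (Matrix.vecMulVec ψ (star ψ))).charpoly =
        X * (X - C (((d : ℂ) - 1)⁻¹)) ^ (d - 1) ∧
      nu p (whChannel d) = ((d : ℝ) - 1) ^ ((1 - (p : ℝ)) / (p : ℝ)) := by
  have hψC : ∑ i, ψ i * (starRingEnd ℂ) (ψ i) = 1 := by
    have key : ∀ i, ψ i * (starRingEnd ℂ) (ψ i) = ((‖ψ i‖ ^ 2 : ℝ) : ℂ) := by
      intro i
      rw [Complex.mul_conj]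
      norm_cast
      rw [Complex.normSq_eq_norm_sq]
    rw [Finset.sum_congr rfl fun i _ => key i, ← Complex.ofReal_sum, hψ, Complex.ofReal_one]
  refine ⟨whCharpoly d hd ψ hψC, ?_⟩
  have hval : ∀ γ : {γ : Matrix (Fin d) (Fin d) ℂ // γ.PosSemidef ∧ γ.trace = 1},
      ((whChannel d γ.1 ^ p).trace.re) ^ ((p : ℝ)⁻¹)
        ≤ ((d : ℝ) - 1) ^ ((1 - (p : ℝ)) / (p : ℝ)) := by
    rintro ⟨γ, hPSD, htr⟩
    obtain ⟨μ, hμ0, hμ1, htrace⟩ := traceWhPow d p hd γ hPSD htr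
    rw [htrace, Complex.ofReal_re, ← keyRpow d p hd hp]
    have ha0 : (0 : ℝ) < (d : ℝ) - 1 := by
      have : (2 : ℝ) ≤ (d : ℝ) := by exact_mod_cast hd
      linarith
    have hc0 : (0 : ℝ) ≤ ((d : ℝ) - 1)⁻¹ := inv_nonneg.mpr ha0.le
    have hμle : ∀ i, μ i ≤ 1 := fun i =>
      hμ1 ▸ Finset.single_le_sum (fun j _ => hμ0 j) (Finset.mem_univ i)
    have hterm0 : ∀ i, 0 ≤ ((d : ℝ) - 1)⁻¹ * (1 - μ i) := fun i =>
      mul_nonneg hc0 (by linarith [hμle i])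
    apply Real.rpow_le_rpow
    · exact Finset.sum_nonneg fun i _ => pow_nonneg (hterm0 i) p
    · calc ∑ i, (((d : ℝ) - 1)⁻¹ * (1 - μ i)) ^ p
          = ∑ i, ((d : ℝ) - 1)⁻¹ ^ p * (1 - μ i) ^ p := by simp [mul_pow]
        _ ≤ ∑ i, ((d : ℝ) - 1)⁻¹ ^ p * (1 - μ i) := by
            refine Finset.sum_le_sum fun i _ => ?_
            refine mul_le_mul_of_nonneg_left ?_ (pow_nonneg hc0 p)
            exact pow_le_of_le_one (by linarith [hμle i]) (by linarith [hμ0 i]) hp.ne'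
        _ = ((d : ℝ) - 1)⁻¹ ^ p * ((d : ℝ) - 1) := by
            rw [← Finset.mul_sum]
            congr 1
            rw [Finset.sum_sub_distrib, hμ1]
            simp
    · exact inv_nonneg.mpr (Nat.cast_nonneg p)
  have hγψ_mem : (Matrix.vecMulVec ψ (star ψ)).PosSemidef
      ∧ (Matrix.vecMulVec ψ (star ψ)).trace = 1 := by
    constructor
    · rw [Matrix.vecMulVec_eq Unit, ← Matrix.conjTranspose_replicateCol]
      exact Matrix.posSemidef_self_mul_conjTranspose _
    · exact traceVMV d ψ hψC
  haveI : Nonempty {γ : Matrix (Fin d) (Fin d) ℂ // γ.PosSemidef ∧ γ.trace = 1} :=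
    ⟨⟨_, hγψ_mem⟩⟩
  have hpure_val : ((whChannel d (Matrix.vecMulVec ψ (star ψ)) ^ p).trace.re) ^ ((p : ℝ)⁻¹)
      = ((d : ℝ) - 1) ^ ((1 - (p : ℝ)) / (p : ℝ)) := by
    rw [whPureTrace d ψ p hp hd hψC, Complex.ofReal_re, keyRpow d p hd hp]
  unfold nu
  refine le_antisymm (ciSup_le hval) ?_
  rw [← hpure_val]
  exact le_ciSup ⟨_, by rintro x ⟨γ, rfl⟩; exact hval γ⟩
    (⟨_, hγψ_mem⟩ : {γ : Matrix (Fin d) (Fin d) ℂ // γ.PosSemidef ∧ γ.trace = 1})
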